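/- The function t ↦ log(1 - e^t + e^{2t} + e^{3t}) is convex on the interval [0, ∞). -/

import Mathlib

open Real Set

private lemma phi_pos (t : ℝ) : 0 < 1 - Real.exp t + Real.exp (2*t) + Real.exp (3*t) := by
  have h : Real.exp (2*t) = Real.exp t ^ 2 := by
    rw [← Real.exp_nat_mul]; norm_num
  have h3 : Real.exp (3*t) = Real.exp t ^ 3 := by
    rw [← Real.exp_nat_mul]; norm_num
  have hu : 0 < Real.exp t := Real.exp_pos t
  rw [h, h3]
  nlinarith [sq_nonneg (Real.exp t - 1), sq_nonneg (Real.exp t), hu]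

private lemma phi_hasDeriv (t : ℝ) :
    HasDerivAt (fun t : ℝ => 1 - Real.exp t + Real.exp (2*t) + Real.exp (3*t))
      (-Real.exp t + 2 * Real.exp (2*t) + 3 * Real.exp (3*t)) t := by
  have h1 : HasDerivAt (fun t : ℝ => Real.exp t) (Real.exp t) t := Real.hasDerivAt_exp t
  have h2 : HasDerivAt (fun t : ℝ => Real.exp (2*t)) (2 * Real.exp (2*t)) t := by
    simpa [mul_comm] using ((hasDerivAt_id t).const_mul 2).exp
  have h3 : HasDerivAt (fun t : ℝ => Real.exp (3*t)) (3 * Real.exp (3*t)) t := by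
    simpa [mul_comm] using ((hasDerivAt_id t).const_mul 3).exp
  have := (((hasDerivAt_const t (1:ℝ)).sub h1).add h2).add h3
  refine this.congr_deriv ?_
  ring

private lemma phi'_hasDeriv (t : ℝ) :
    HasDerivAt (fun t : ℝ => -Real.exp t + 2 * Real.exp (2*t) + 3 * Real.exp (3*t))
      (-Real.exp t + 4 * Real.exp (2*t) + 9 * Real.exp (3*t)) t := by
  have h1 : HasDerivAt (fun t : ℝ => Real.exp t) (Real.exp t) t := Real.hasDerivAt_exp t
  have h2 : HasDerivAt (fun t : ℝ => Real.exp (2*t)) (2 * Real.exp (2*t)) t := by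
    simpa [mul_comm] using ((hasDerivAt_id t).const_mul 2).exp
  have h3 : HasDerivAt (fun t : ℝ => Real.exp (3*t)) (3 * Real.exp (3*t)) t := by
    simpa [mul_comm] using ((hasDerivAt_id t).const_mul 3).exp
  have := ((h1.neg).add (h2.const_mul 2)).add (h3.const_mul 3)
  refine this.congr_deriv ?_
  ring

theorem stmt_3 :
    ConvexOn ℝ (Set.Ici (0 : ℝ))
      (fun t : ℝ => Real.log (1 - Real.exp t + Real.exp (2*t) + Real.exp (3*t))) := by
  set φ : ℝ → ℝ := fun t => 1 - Real.exp t + Real.exp (2*t) + Real.exp (3*t) with hφdef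
  set φ' : ℝ → ℝ := fun t => -Real.exp t + 2 * Real.exp (2*t) + 3 * Real.exp (3*t) with hφ'def
  set φ'' : ℝ → ℝ := fun t => -Real.exp t + 4 * Real.exp (2*t) + 9 * Real.exp (3*t) with hφ''def
  have hpos : ∀ t : ℝ, 0 < φ t := phi_pos
  have hne : ∀ t : ℝ, φ t ≠ 0 := fun t => (hpos t).ne'
  have hf' : ∀ t : ℝ, HasDerivAt (fun t => Real.log (φ t)) (φ' t / φ t) t := fun t =>
    (phi_hasDeriv t).log (hne t)
  have hf'' : ∀ t : ℝ, HasDerivAt (fun t => φ' t / φ t)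
      ((φ'' t * φ t - φ' t * φ' t) / (φ t)^2) t := fun t =>
    (phi'_hasDeriv t).div (phi_hasDeriv t) (hne t)
  apply convexOn_of_hasDerivWithinAt2_nonneg (f' := fun t => φ' t / φ t)
    (f'' := fun t => (φ'' t * φ t - φ' t * φ' t) / (φ t)^2) (convex_Ici 0)
  · exact fun t _ => ((hf' t).continuousAt).continuousWithinAt
  · exact fun t _ => (hf' t).hasDerivWithinAt
  · exact fun t _ => (hf'' t).hasDerivWithinAt
  · intro t ht
    rw [interior_Ici] at ht
    have hu : 1 < Real.exp t := by
      have := Real.exp_lt_exp.mpr (show (0:ℝ) < t from ht)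
      simpa using this
    apply div_nonneg _ (sq_nonneg _)
    have h2 : Real.exp (2*t) = Real.exp t ^ 2 := by
      rw [← Real.exp_nat_mul]; norm_num
    have h3 : Real.exp (3*t) = Real.exp t ^ 3 := by
      rw [← Real.exp_nat_mul]; norm_num
    simp only [hφdef, hφ'def, hφ''def, h2, h3]
    set u := Real.exp t
    nlinarith [mul_nonneg (pow_nonneg (by linarith : (0:ℝ) ≤ u) 3) (sq_nonneg (u - 2)),
      sq_nonneg (u - 1), sq_nonneg u, hu]
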